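/- Let D^b = (Ω^b,B^b) be the Boolean quadruple system of order 2^m, where m ≥ 2. Then: (i) every 3-element subset of Ω^b is a collinear triple of D^b, so the collinear triples form a regular two-graph on Ω^b; (ii) D^b satisfies (△); and (iii) for any ∞ ∈ Ω^b, the hole-stabilizer π_∞(D^b) is trivial and the Conway groupoid L_∞(D^b) is an elementary abelian group of order 2^m (indeed, it equals the group of translations v ↦ v+w of F_2^m). -/

import Mathlib

open Equiv

variable {Ω : Type*}

/-- `(Ω, B)` is a `2-(n,4,lam)` design: `Ω` has `n` points, every line has 4 points,
and every 2-element subset of `Ω` is contained in exactly `lam` lines. -/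
def IsDesign [Fintype Ω] (B : Set (Finset Ω)) (n lam : ℕ) : Prop :=
  Fintype.card Ω = n ∧
  (∀ L ∈ B, L.card = 4) ∧
  (∀ p : Finset Ω, p.card = 2 → {L ∈ B | p ⊆ L}.ncard = lam)

/-- A design is supersimple if any two distinct lines intersect in at most two points. -/
def Supersimple [DecidableEq Ω] (B : Set (Finset Ω)) : Prop :=
  ∀ L₁ ∈ B, ∀ L₂ ∈ B, L₁ ≠ L₂ → (L₁ ∩ L₂).card ≤ 2

/-- Condition (△): the symmetric difference of two lines meeting in two points is a line. -/
def SymmDiffCond [DecidableEq Ω] (B : Set (Finset Ω)) : Prop :=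
  ∀ L₁ ∈ B, ∀ L₂ ∈ B, (L₁ ∩ L₂).card = 2 → symmDiff L₁ L₂ ∈ B

/-- The collinear triples: 3-element subsets contained in some line. -/
def collinearTriples (B : Set (Finset Ω)) : Set (Finset Ω) :=
  { t | t.card = 3 ∧ ∃ L ∈ B, t ⊆ L }

/-- `(Ω, C)` is a regular two-graph: `C` is a set of 3-element subsets, every 2-element
subset lies in exactly `μ` members of `C` for a constant `μ`, and every 4-element subset
contains exactly 0, 2 or 4 members of `C`. -/
def IsRegularTwoGraph (C : Set (Finset Ω)) : Prop :=
  (∀ t ∈ C, t.card = 3) ∧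
  (∃ μ : ℕ, ∀ p : Finset Ω, p.card = 2 → {t ∈ C | p ⊆ t}.ncard = μ) ∧
  (∀ q : Finset Ω, q.card = 4 →
    {t ∈ C | t ⊆ q}.ncard = 0 ∨ {t ∈ C | t ⊆ q}.ncard = 2 ∨ {t ∈ C | t ⊆ q}.ncard = 4)

/-- `mv a b` is the elementary move `[a,b]`: it is the identity when `a = b`; when `a ≠ b`
it interchanges `a` and `b`, interchanges `x` and `y` whenever `{a,b,x,y}` is a line, and
fixes every point not collinear with `a, b`. -/
def IsElemMoveFn [DecidableEq Ω] (B : Set (Finset Ω)) (mv : Ω → Ω → Equiv.Perm Ω) : Prop :=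
  (∀ a, mv a a = 1) ∧
  ∀ a b : Ω, a ≠ b →
    mv a b a = b ∧ mv a b b = a ∧
    (∀ x y : Ω, ({a, b, x, y} : Finset Ω) ∈ B → mv a b x = y) ∧
    (∀ x : Ω, x ≠ a → x ≠ b → (∀ L ∈ B, ¬(a ∈ L ∧ b ∈ L ∧ x ∈ L)) → mv a b x = x)

/-- The move sequence `[a, b₁, …, b_k] = [a,b₁][b₁,b₂]⋯[b_{k-1},b_k]`; the factors are
applied left-to-right (so in Lean's convention the product is reversed). -/
def moveSeq (mv : Ω → Ω → Equiv.Perm Ω) : Ω → List Ω → Equiv.Perm Ω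
  | _, [] => 1
  | a, b :: l => moveSeq mv b l * mv a b

/-- The Conway groupoid `L_x(D)`: all move sequences starting at `x`. -/
def ConwayGroupoid (mv : Ω → Ω → Equiv.Perm Ω) (x : Ω) : Set (Equiv.Perm Ω) :=
  { g | ∃ l : List Ω, g = moveSeq mv x l }

/-- The hole stabilizer `π_x(D)`: all move sequences starting and ending at `x`. -/
def holeStabilizer (mv : Ω → Ω → Equiv.Perm Ω) (x : Ω) : Set (Equiv.Perm Ω) :=
  { g | ∃ l : List Ω, g = moveSeq mv x (l ++ [x]) }

/-- `L(D)`: the set of all move sequences. -/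
def allMoveSeqs (mv : Ω → Ω → Equiv.Perm Ω) : Set (Equiv.Perm Ω) :=
  { g | ∃ (a : Ω) (l : List Ω), g = moveSeq mv a l }

/-- The set `E` of elementary moves `[a,b]` with `a ≠ b`. -/
def elemMoves (mv : Ω → Ω → Equiv.Perm Ω) : Set (Equiv.Perm Ω) :=
  { g | ∃ a b : Ω, a ≠ b ∧ g = mv a b }

/-- `\overline{x,y}`: the set of points lying on a common line with `x` and `y`. -/
def lineJoin (B : Set (Finset Ω)) (x y : Ω) : Set Ω :=
  { z | ∃ L ∈ B, x ∈ L ∧ y ∈ L ∧ z ∈ L }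

/-- A set `G` of permutations is transitive on `S`. -/
def SetTransitiveOn (G : Set (Equiv.Perm Ω)) (S : Set Ω) : Prop :=
  ∀ x ∈ S, ∀ y ∈ S, ∃ g ∈ G, g x = y

/-- `Δ` is a block for the set `G` of permutations. -/
def SetIsBlock (G : Set (Equiv.Perm Ω)) (Δ : Set Ω) : Prop :=
  ∀ g ∈ G, (⇑g) '' Δ = Δ ∨ Disjoint ((⇑g) '' Δ) Δ

/-- A set `G` of permutations is primitive on `S`: it is transitive on `S` and every
block contained in `S` is trivial (equivalently, the only invariant partitions are the
partition into singletons and the one-part partition). -/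
def SetPrimitiveOn (G : Set (Equiv.Perm Ω)) (S : Set Ω) : Prop :=
  SetTransitiveOn G S ∧
  ∀ Δ : Set Ω, Δ ⊆ S → SetIsBlock G Δ → Δ.Subsingleton ∨ Δ = S

/-- Primitivity on all of `Ω`. -/
def SetPrimitive (G : Set (Equiv.Perm Ω)) : Prop :=
  SetPrimitiveOn G Set.univ

/-- `(G, E)` is a 3-transposition group: `G` is the group generated by `E`, `E` is a
union of `G`-conjugacy classes of involutions, and any product of two members of `E`
has order 1, 2 or 3. -/
def Is3TranspositionGroup (G E : Set (Equiv.Perm Ω)) : Prop :=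
  ((Subgroup.closure E : Subgroup (Equiv.Perm Ω)) : Set (Equiv.Perm Ω)) = G ∧
  (∀ e ∈ E, orderOf e = 2) ∧
  (∀ g ∈ G, ∀ e ∈ E, g * e * g⁻¹ ∈ E) ∧
  (∀ g ∈ E, ∀ h ∈ E, orderOf (g * h) = 1 ∨ orderOf (g * h) = 2 ∨ orderOf (g * h) = 3)

/-- Two designs are isomorphic: a bijection of the point sets carrying lines to lines. -/
def DesignIso {Ω₁ Ω₂ : Type*} (B₁ : Set (Finset Ω₁)) (B₂ : Set (Finset Ω₂)) : Prop :=
  ∃ e : Ω₁ ≃ Ω₂, ∀ L : Finset Ω₁, L ∈ B₁ ↔ L.map e.toEmbedding ∈ B₂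

/-- The lines of the Boolean quadruple system of order `2^m`: 4-subsets of `F_2^m`
summing to zero. -/
def booleanLines (m : ℕ) : Set (Finset (Fin m → ZMod 2)) :=
  { L | L.card = 4 ∧ ∑ v ∈ L, v = 0 }

/-- `V = F_2^{2m}`, with coordinates indexed by `Fin m ⊕ Fin m`. -/
abbrev Vsp (m : ℕ) := (Fin m ⊕ Fin m) → ZMod 2

/-- `θ(u) = u e uᵀ` where `e` is the block matrix `(0 I; 0 0)`. -/
def theta {m : ℕ} (u : Vsp m) : ZMod 2 :=
  ∑ i : Fin m, u (Sum.inl i) * u (Sum.inr i)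

/-- The lines of the design `D^a`: 4-subsets of `V` summing to zero on which `θ` sums
to zero. -/
def linesA (m : ℕ) : Set (Finset (Vsp m)) :=
  { L | L.card = 4 ∧ ∑ v ∈ L, v = 0 ∧ ∑ v ∈ L, theta v = 0 }

/-- The lines of the design `D^ε`: 4-subsets of `{v ∈ V : θ(v) = ε}` summing to zero. -/
def linesEps (m : ℕ) (ε : ZMod 2) : Set (Finset {v : Vsp m // theta v = ε}) :=
  { L | L.card = 4 ∧ ∑ v ∈ L, (v : Vsp m) = 0 }

/-- The derived graph `G_{D,∞}`: vertices are the points other than `∞`, with `a, b`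
adjacent iff `{∞,a,b}` is a collinear triple. -/
def derivedGraph [DecidableEq Ω] (B : Set (Finset Ω)) (inf : Ω) :
    SimpleGraph {x : Ω // x ≠ inf} where
  Adj a b := a ≠ b ∧ ({inf, (a : Ω), (b : Ω)} : Finset Ω) ∈ collinearTriples B
  symm := by
    refine ⟨?_⟩
    rintro a b ⟨hab, h⟩
    exact ⟨hab.symm, by rwa [Finset.pair_comm (b : Ω) (a : Ω)]⟩
  loopless := by refine ⟨?_⟩; rintro a ⟨h, -⟩; exact h rfl

/-- `w` witnesses the triangle property for the edge `{u,v}`: `w` is a common neighbour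
of `u` and `v`, and every other vertex is adjacent to exactly one or three of `u,v,w`. -/
def TriangleWitness {V : Type*} (G : SimpleGraph V) (u v w : V) : Prop :=
  G.Adj u w ∧ G.Adj v w ∧
  ∀ x : V, x ∉ ({u, v, w} : Set V) →
    ({y ∈ ({u, v, w} : Set V) | G.Adj x y}.ncard = 1 ∨
     {y ∈ ({u, v, w} : Set V) | G.Adj x y}.ncard = 3)

/-- The triangle property for a graph. -/
def HasTriangleProperty {V : Type*} (G : SimpleGraph V) : Prop :=
  (∃ u v, G.Adj u v) ∧ ∀ u v : V, G.Adj u v → ∃ w, TriangleWitness G u v w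

/-- The strong triangle property: each edge has a unique triangle-property witness. -/
def HasStrongTriangleProperty {V : Type*} (G : SimpleGraph V) : Prop :=
  (∃ u v, G.Adj u v) ∧ ∀ u v : V, G.Adj u v → ∃! w, TriangleWitness G u v w

/-- A coherent 4-subset: all four of its 3-element subsets lie in `C`. -/
def IsCoherent (C : Set (Finset Ω)) (q : Finset Ω) : Prop :=
  q.card = 4 ∧ ∀ t ⊆ q, t.card = 3 → t ∈ C
namespace BPaux
variable {m : ℕ}

lemma addSelf (a : Fin m → ZMod 2) : a + a = 0 := by
  funext i; exact CharTwo.add_self_eq_zero _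

lemma addEq {a b : Fin m → ZMod 2} : a + b = 0 ↔ a = b := by
  constructor
  · intro h; funext i
    have h2 := congrFun h i
    have := CharTwo.add_eq_iff_eq_add.mp h2
    simpa using this
  · rintro rfl; exact addSelf a

lemma ne_sum3 {a b c : Fin m → ZMod 2} (hbc : b ≠ c) : a ≠ a + b + c := by
  intro h
  rw [add_assoc] at h
  exact hbc (addEq.mp (left_eq_add.mp h))

lemma line_mem {a b c d : Fin m → ZMod 2} (hab : a ≠ b) (hac : a ≠ c) (had : a ≠ d)
    (hbc : b ≠ c) (hbd : b ≠ d) (hcd : c ≠ d) (hsum : a + b + c + d = 0) :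
    ({a, b, c, d} : Finset (Fin m → ZMod 2)) ∈ booleanLines m := by
  have h1 : c ∉ ({d} : Finset (Fin m → ZMod 2)) := by simp [hcd]
  have h2 : b ∉ ({c, d} : Finset (Fin m → ZMod 2)) := by simp [hbc, hbd]
  have h3 : a ∉ ({b, c, d} : Finset (Fin m → ZMod 2)) := by simp [hab, hac, had]
  refine ⟨?_, ?_⟩
  · rw [show ({a,b,c,d} : Finset (Fin m → ZMod 2)) = insert a (insert b (insert c {d})) from rfl,
      Finset.card_insert_of_notMem h3, Finset.card_insert_of_notMem h2,
      Finset.card_insert_of_notMem h1, Finset.card_singleton]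
  · rw [show ({a,b,c,d} : Finset (Fin m → ZMod 2)) = insert a (insert b (insert c {d})) from rfl,
      Finset.sum_insert h3, Finset.sum_insert h2, Finset.sum_insert h1, Finset.sum_singleton]
    linear_combination hsum


lemma mv_apply {mv : (Fin m → ZMod 2) → (Fin m → ZMod 2) → Equiv.Perm (Fin m → ZMod 2)}
    (hmv : IsElemMoveFn (booleanLines m) mv) (a b v : Fin m → ZMod 2) :
    mv a b v = v + a + b := by
  by_cases hab : a = b
  · subst hab
    rw [hmv.1 a, Equiv.Perm.one_apply, add_assoc, addSelf, add_zero]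
  · obtain ⟨h1, h2, h3, h4⟩ := hmv.2 a b hab
    by_cases hva : v = a
    · subst hva; rw [h1, addSelf, zero_add]
    · by_cases hvb : v = b
      · subst hvb
        rw [h2, add_comm v a, add_assoc, addSelf, add_zero]
      · have hya : v + a + b ≠ a := by
          intro h
          apply hvb
          have : v = a + b + (v + a + b) := by linear_combination -addSelf a - addSelf b
          rw [h] at this
          rw [this]; linear_combination addSelf a
        have hyb : v + a + b ≠ b := by
          intro h
          apply hva
          have : v = a + b + (v + a + b) := by linear_combination -addSelf a - addSelf b
          rw [h] at this
          rw [this]; linear_combination addSelf b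
        have hyv : v + a + b ≠ v := by
          intro h
          apply hab
          exact addEq.mp (by linear_combination h)
        apply h3
        have := line_mem (a := a) (b := b) (c := v) (d := v + a + b)
          hab (Ne.symm hva) (Ne.symm hya) (Ne.symm hvb) (Ne.symm hyb) (Ne.symm hyv)
          (by linear_combination addSelf a + addSelf b + addSelf v)
        exact this

lemma moveSeq_apply {mv : (Fin m → ZMod 2) → (Fin m → ZMod 2) → Equiv.Perm (Fin m → ZMod 2)}
    (hmv : IsElemMoveFn (booleanLines m) mv) :
    ∀ (l : List (Fin m → ZMod 2)) (a v : Fin m → ZMod 2),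
      moveSeq mv a l v = v + a + l.getLastD a
  | [], a, v => by
      simp only [moveSeq, Equiv.Perm.one_apply, List.getLastD_nil]
      rw [add_assoc, addSelf, add_zero]
  | b :: l, a, v => by
      rw [moveSeq, Equiv.Perm.mul_apply, mv_apply hmv, moveSeq_apply hmv l b,
        List.getLastD_cons]
      linear_combination addSelf b

end BPaux


/-- Lemma 2.12: in the Boolean quadruple system `D^b` of order `2^m`
(`m ≥ 2`): every 3-subset is collinear, so the collinear triples form a regular
two-graph; `D^b` satisfies (△); and for any `∞`, the hole stabilizer is trivial and
the Conway groupoid is the elementary abelian group of order `2^m` consisting of all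
translations of `F_2^m`. -/
theorem boolean_properties (m : ℕ) (hm : 2 ≤ m)
    (mv : (Fin m → ZMod 2) → (Fin m → ZMod 2) → Equiv.Perm (Fin m → ZMod 2))
    (hmv : IsElemMoveFn (booleanLines m) mv) (inf : Fin m → ZMod 2) :
    (∀ t : Finset (Fin m → ZMod 2), t.card = 3 → t ∈ collinearTriples (booleanLines m)) ∧
    IsRegularTwoGraph (collinearTriples (booleanLines m)) ∧
    SymmDiffCond (booleanLines m) ∧
    holeStabilizer mv inf = {1} ∧
    ConwayGroupoid mv inf =
      { g : Equiv.Perm (Fin m → ZMod 2) | ∃ w, ∀ v, g v = v + w } ∧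
    (ConwayGroupoid mv inf).ncard = 2 ^ m ∧
    (∀ g ∈ ConwayGroupoid mv inf, g * g = 1) ∧
    (∀ g ∈ ConwayGroupoid mv inf, ∀ h ∈ ConwayGroupoid mv inf,
      g * h = h * g ∧ g * h ∈ ConwayGroupoid mv inf) := by
    classical
  have tri : ∀ t : Finset (Fin m → ZMod 2), t.card = 3 →
      t ∈ collinearTriples (booleanLines m) := by
    intro t ht
    obtain ⟨a, b, c, hab, hac, hbc, rfl⟩ := Finset.card_eq_three.mp ht
    have had : a ≠ a + b + c := BPaux.ne_sum3 hbc
    have hbd : b ≠ a + b + c := by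
      have h : a + b + c = b + a + c := by ring
      rw [h]; exact BPaux.ne_sum3 hac
    have hcd : c ≠ a + b + c := by
      have h : a + b + c = c + a + b := by ring
      rw [h]; exact BPaux.ne_sum3 hab
    refine ⟨ht, ⟨{a, b, c, a + b + c}, ?_, ?_⟩⟩
    · exact BPaux.line_mem hab hac had hbc hbd hcd
        (by linear_combination BPaux.addSelf a + BPaux.addSelf b + BPaux.addSelf c)
    · intro x hx
      simp only [Finset.mem_insert, Finset.mem_singleton] at hx ⊢
      tauto
  have hhole : holeStabilizer mv inf = {1} := by
    ext g
    simp only [holeStabilizer, Set.mem_setOf_eq, Set.mem_singleton_iff]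
    constructor
    · rintro ⟨l, rfl⟩
      ext v
      rw [BPaux.moveSeq_apply hmv, List.getLastD_concat, Equiv.Perm.one_apply,
        add_assoc, BPaux.addSelf, add_zero]
    · rintro rfl
      refine ⟨[], ?_⟩
      ext v
      rw [Equiv.Perm.one_apply, List.nil_append, BPaux.moveSeq_apply hmv,
        List.getLastD_cons, List.getLastD_nil, add_assoc, BPaux.addSelf, add_zero]
  have hC : ConwayGroupoid mv inf
      = { g : Equiv.Perm (Fin m → ZMod 2) | ∃ w, ∀ v, g v = v + w } := by
    ext g
    simp only [ConwayGroupoid, Set.mem_setOf_eq]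
    constructor
    · rintro ⟨l, rfl⟩
      exact ⟨inf + l.getLastD inf, fun v => by rw [BPaux.moveSeq_apply hmv, add_assoc]⟩
    · rintro ⟨w, hw⟩
      refine ⟨[inf + w], ?_⟩
      apply Equiv.ext; intro v
      rw [hw v, BPaux.moveSeq_apply hmv, List.getLastD_cons, List.getLastD_nil]
      have hvw : v + inf + (inf + w) = v + w := by linear_combination BPaux.addSelf inf
      exact hvw.symm
  refine ⟨tri, ⟨fun t ht => ht.1, ⟨2 ^ m - 2, ?_⟩, ?_⟩, ?_, hhole, hC, ?_, ?_, ?_⟩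
  · -- constant mu
    intro p hp
    have hset : {t ∈ collinearTriples (booleanLines m) | p ⊆ t}
        = ↑(((Finset.univ : Finset (Fin m → ZMod 2)) \ p).image (fun x => insert x p)) := by
      ext t
      simp only [Set.mem_setOf_eq, Finset.coe_image, Set.mem_image, Finset.mem_coe,
        Finset.mem_sdiff, Finset.mem_univ, true_and]
      constructor
      · rintro ⟨ht, hpt⟩
        have h3 := ht.1
        have h1 : (t \ p).card = 1 := by rw [Finset.card_sdiff_of_subset hpt, h3, hp]
        obtain ⟨x, hx⟩ := Finset.card_eq_one.mp h1
        have hxt : x ∈ t \ p := hx ▸ Finset.mem_singleton_self x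
        refine ⟨x, (Finset.mem_sdiff.mp hxt).2, ?_⟩
        have h2 := Finset.sdiff_union_of_subset hpt
        rw [hx] at h2
        rw [← h2]
        ext y
        simp only [Finset.mem_insert, Finset.mem_union, Finset.mem_singleton]
      · rintro ⟨x, hxp, rfl⟩
        refine ⟨tri _ ?_, Finset.subset_insert x p⟩
        rw [Finset.card_insert_of_notMem hxp, hp]
    have hinj : Set.InjOn (fun x => insert x p)
        ↑(((Finset.univ : Finset (Fin m → ZMod 2)) \ p)) := by
      intro x hx y hy hxy
      simp only [Finset.coe_sdiff, Finset.coe_univ, Set.mem_diff, Set.mem_univ, true_and,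
        Finset.mem_coe] at hx hy
      have hxy' : insert x p = insert y p := hxy
      have hmem : x ∈ insert y p := by
        rw [← hxy']; exact Finset.mem_insert_self x p
      rcases Finset.mem_insert.mp hmem with h | h
      · exact h
      · exact absurd h hx
    rw [hset, Set.ncard_coe_finset, Finset.card_image_of_injOn hinj,
      Finset.card_sdiff_of_subset (Finset.subset_univ p), Finset.card_univ, hp]
    congr 1
    simp
  · -- four-subsets
    intro q hq
    right; right
    have hset : {t ∈ collinearTriples (booleanLines m) | t ⊆ q} = ↑(q.powersetCard 3) := by
      ext t
      simp only [Set.mem_setOf_eq, Finset.mem_coe, Finset.mem_powersetCard]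
      constructor
      · rintro ⟨ht, htq⟩; exact ⟨htq, ht.1⟩
      · rintro ⟨htq, ht⟩; exact ⟨tri t ht, htq⟩
    rw [hset, Set.ncard_coe_finset, Finset.card_powersetCard, hq]
    decide
  · -- symmDiff
    intro L₁ h₁ L₂ h₂ hi
    obtain ⟨hc₁, hs₁⟩ := h₁
    obtain ⟨hc₂, hs₂⟩ := h₂
    have hu : (L₁ ∪ L₂).card = 6 := by
      have := Finset.card_union_add_card_inter L₁ L₂
      omega
    have hsd : symmDiff L₁ L₂ = (L₁ ∪ L₂) \ (L₁ ∩ L₂) := symmDiff_eq_sup_sdiff_inf L₁ L₂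
    refine ⟨?_, ?_⟩
    · rw [hsd, Finset.card_sdiff_of_subset Finset.inter_subset_union, hu, hi]
    · have h5 : ∑ v ∈ (L₁ ∪ L₂) \ (L₁ ∩ L₂), v + ∑ v ∈ L₁ ∩ L₂, v = ∑ v ∈ L₁ ∪ L₂, v :=
        Finset.sum_sdiff Finset.inter_subset_union
      have h6 : ∑ v ∈ L₁ ∪ L₂, v + ∑ v ∈ L₁ ∩ L₂, v = ∑ v ∈ L₁, v + ∑ v ∈ L₂, v :=
        Finset.sum_union_inter
      have hI : (∑ v ∈ L₁ ∩ L₂, v) + (∑ v ∈ L₁ ∩ L₂, v) = 0 := BPaux.addSelf _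
      rw [hsd]
      linear_combination h5 + h6 + hs₁ + hs₂ - hI
  · -- ncard
    have hrange : { g : Equiv.Perm (Fin m → ZMod 2) | ∃ w, ∀ v, g v = v + w }
        = Set.range (fun w : Fin m → ZMod 2 => Equiv.addRight w) := by
      ext g
      simp only [Set.mem_setOf_eq, Set.mem_range]
      constructor
      · rintro ⟨w, hw⟩
        exact ⟨w, Equiv.ext fun v => (hw v).symm⟩
      · rintro ⟨w, rfl⟩
        exact ⟨w, fun v => rfl⟩
    have hinj : Function.Injective (fun w : Fin m → ZMod 2 => Equiv.addRight w) := by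
      intro w w' h
      have := congrArg (fun e : Equiv.Perm (Fin m → ZMod 2) => e 0) h
      simpa using this
    rw [hC, hrange, ← Set.image_univ, Set.ncard_image_of_injective _ hinj,
      Set.ncard_univ, Nat.card_eq_fintype_card]
    simp
  · -- involutions
    intro g hg
    rw [hC] at hg
    obtain ⟨w, hw⟩ := hg
    ext v
    rw [Equiv.Perm.mul_apply, hw, hw, Equiv.Perm.one_apply, add_assoc, BPaux.addSelf, add_zero]
  · -- abelian and closed
    intro g hg h hh
    rw [hC] at hg hh
    obtain ⟨w₁, hw₁⟩ := hg
    obtain ⟨w₂, hw₂⟩ := hh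
    constructor
    · apply Equiv.ext; intro v
      rw [Equiv.Perm.mul_apply, Equiv.Perm.mul_apply, hw₁, hw₂, hw₁, hw₂]
      ring
    · rw [hC]
      exact ⟨w₂ + w₁, fun v => by rw [Equiv.Perm.mul_apply, hw₁, hw₂, add_assoc]⟩
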